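/- Let κ be an infinite cardinal, M a first-order structure with vocabulary τ(M), and w a finite nonempty subset of the universe of M. If rk¹(w, M; <κ) ≥ (|τ(M)| + ℵ₀)⁺ (the cardinal successor of |τ(M)| + ℵ₀), then rk¹(w, M; <κ) = ∞. -/

import Mathlib

open FirstOrder Cardinal

universe u

namespace Sh522

/-- `a ∈ clLt L M κ B` iff `a` is in the `<κ`-closure of `B` in `M`:
for some quantifier-free formula `φ(y, x₁, …, xₙ)` and parameters `b` from `B`,
`M ⊨ φ[a, b]` and the set of solutions of `φ(−, b)` has cardinality `< κ`. -/
def clLt (L : FirstOrder.Language.{u, u}) (M : Type u) [L.Structure M]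
    (κ : Cardinal.{u}) (B : Set M) : Set M :=
  {a | ∃ (n : ℕ) (φ : L.Formula (Fin (n + 1))),
      FirstOrder.Language.BoundedFormula.IsQF φ ∧
      ∃ b : Fin n → M, (∀ i, b i ∈ B) ∧
        φ.Realize (Fin.cons a b) ∧
        Cardinal.mk {x : M // φ.Realize (Fin.cons x b)} < κ}

/-- `rk^l(w, M; <κ) ≥ 0`. -/
def rkBase (L : FirstOrder.Language.{u, u}) (M : Type u) [L.Structure M]
    (κ : Cardinal.{u}) (w : Set M) : Prop :=
  w.Finite ∧ w.Nonempty ∧ ∀ a ∈ w, a ∉ clLt L M κ (w \ {a})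

/-- The successor step of the rank: `rk^l(w, M; <κ) ≥ β + 1` where `P` is
`rk^l(−, M; <κ) ≥ β`. -/
def rkStep (L : FirstOrder.Language.{u, u}) (M : Type u) [L.Structure M]
    (l : ℕ) (κ : Cardinal.{u}) (P : Set M → Prop) (w : Set M) : Prop :=
  w.Finite ∧ w.Nonempty ∧
  ∀ (n : ℕ) (a : Fin n → M), Function.Injective a → Set.range a = w →
    ∀ (k : Fin n) (φ : L.Formula (Fin n)),
      FirstOrder.Language.BoundedFormula.IsQF φ → φ.Realize a →
      ∃ b : Fin 2 → Fin n → M,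
        P (Set.range fun p : Fin 2 × Fin n => b p.1 p.2) ∧
        (∀ i : Fin 2, φ.Realize (b i)) ∧
        b 0 k ≠ b 1 k ∧
        (∀ m : Fin n, m ≠ k → b 0 m = b 1 m) ∧
        (l = 0 → ∀ m : Fin n, b 0 m = a m)

/-- `rkGe L M l κ α w` says `rk^l(w, M; <κ) ≥ α`. -/
noncomputable def rkGe (L : FirstOrder.Language.{u, u}) (M : Type u) [L.Structure M]
    (l : ℕ) (κ : Cardinal.{u}) (α : Ordinal.{u}) : Set M → Prop :=
  Ordinal.limitRecOn (motive := fun _ => Set M → Prop) α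
    (rkBase L M κ)
    (fun _ ih => rkStep L M l κ ih)
    (fun o _ ih w => ∀ (β : Ordinal.{u}) (h : β < o), ih β h w)

/-- `Pr l α lam bound θ` is `Pr^l_α(lam; <bound, θ)`: every model with universe of
cardinality `lam` and vocabulary of cardinality `≤ θ` has `rk^l(M; <bound) ≥ α`,
where `rk^l(M; <bound) = sup { rk^l(w, M; <bound) + 1 : w ∈ [M]* }`. -/
def Pr (l : ℕ) (α : Ordinal.{u}) (lam bound θ : Cardinal.{u}) : Prop :=
  ∀ (L : FirstOrder.Language.{u, u}) (M : Type u) (S : L.Structure M),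
    Cardinal.mk M = lam → L.card ≤ θ →
    ∀ β < α, ∃ w : Set M, w.Finite ∧ w.Nonempty ∧ @rkGe L M S l bound β w

/-! ### Auxiliary lemmas -/

section Aux

variable (L : FirstOrder.Language.{u, u}) (M : Type u) [L.Structure M] (l : ℕ) (κ : Cardinal.{u})

theorem rkGe_zero : rkGe L M l κ 0 = rkBase L M κ :=
  Ordinal.limitRecOn_zero _ _ _

theorem rkGe_succ (α : Ordinal.{u}) :
    rkGe L M l κ (Order.succ α) = rkStep L M l κ (rkGe L M l κ α) :=
  Ordinal.limitRecOn_succ _ _ _ _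

theorem rkGe_limit {o : Ordinal.{u}} (ho : Order.IsSuccLimit o) (w : Set M) :
    rkGe L M l κ o w ↔ ∀ β < o, rkGe L M l κ β w := by
  unfold rkGe
  rw [Ordinal.limitRecOn_limit _ _ _ _ ho]

theorem rkGe_of_le_of_limit {o β : Ordinal.{u}} (ho : Order.IsSuccLimit o) (hβ : β ≤ o) (w : Set M)
    (h : rkGe L M l κ o w) : rkGe L M l κ β w := by
  rcases eq_or_lt_of_le hβ with rfl | h'
  · exact h
  · exact (rkGe_limit L M l κ ho w).1 h β h'

/-- The index type for "witness data": a size `n`, a coordinate `k < n`, and a formula in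
`n` variables. -/
def WitIdx (L : FirstOrder.Language.{u, u}) : Type u :=
  (m : ULift.{u} ℕ) × (ULift.{u} (Fin m.down) × L.Formula (Fin m.down))

/-- `Wit d ε` says that there is a witness pair for the data `d` whose range has rank `≥ ε`.
Crucially, this does not depend on any ambient finite set. -/
def Wit (d : WitIdx L) (ε : Ordinal.{u}) : Prop :=
  ∃ b : Fin 2 → Fin d.1.down → M,
    rkGe L M l κ ε (Set.range fun p : Fin 2 × Fin d.1.down => b p.1 p.2) ∧
    (∀ i : Fin 2, d.2.2.Realize (b i)) ∧
    b 0 d.2.1.down ≠ b 1 d.2.1.down ∧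
    (∀ m : Fin d.1.down, m ≠ d.2.1.down → b 0 m = b 1 m)

/-- `Bad d ε` says `ε` is the exact level at which witnesses for `d` stop existing. -/
def Bad (d : WitIdx L) (ε : Ordinal.{u}) : Prop :=
  ¬ Wit L M l κ d ε ∧ ∀ ε' < ε, Wit L M l κ d ε'

theorem bad_unique {d : WitIdx L} {ε₁ ε₂ : Ordinal.{u}}
    (h₁ : Bad L M l κ d ε₁) (h₂ : Bad L M l κ d ε₂) : ε₁ = ε₂ := by
  rcases lt_trichotomy ε₁ ε₂ with h | h | h
  · exact absurd (h₂.2 _ h) h₁.1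
  · exact h
  · exact absurd (h₁.2 _ h) h₂.1

theorem card_formula_le (n : ℕ) : #(L.Formula (Fin n)) ≤ L.card + ℵ₀ := by
  have h1 : #(L.Formula (Fin n)) ≤ #(Σ m, L.BoundedFormula (Fin n) m) :=
    Cardinal.mk_le_of_injective (f := fun φ => ⟨0, φ⟩) (fun _ _ hab => by simpa using hab)
  refine h1.trans (FirstOrder.Language.BoundedFormula.card_le.trans ?_)
  apply max_le
  · exact le_add_self
  · have h2 : Cardinal.lift.{u} #(Fin n) ≤ ℵ₀ := by
      simp [Cardinal.mk_fin]
    have h3 : Cardinal.lift.{0} L.card = L.card := Cardinal.lift_id' _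
    rw [h3]
    calc Cardinal.lift.{u} #(Fin n) + L.card ≤ ℵ₀ + L.card := by
          exact add_le_add_left h2 _
      _ = L.card + ℵ₀ := add_comm _ _

theorem card_witIdx_le : #(WitIdx L) ≤ L.card + ℵ₀ := by
  have hμ : ℵ₀ ≤ L.card + ℵ₀ := le_add_self
  have h1 : #(WitIdx L) =
      Cardinal.sum (fun m : ULift.{u} ℕ =>
        #(ULift.{u} (Fin m.down) × L.Formula (Fin m.down))) := Cardinal.mk_sigma _
  rw [h1]
  have h2 : ∀ m : ULift.{u} ℕ,
      #(ULift.{u} (Fin m.down) × L.Formula (Fin m.down)) ≤ L.card + ℵ₀ := by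
    intro m
    have hp : #(ULift.{u} (Fin m.down) × L.Formula (Fin m.down)) =
        #(ULift.{u} (Fin m.down)) * #(L.Formula (Fin m.down)) := by
      rw [Cardinal.mk_prod, Cardinal.lift_id, Cardinal.lift_id]
    rw [hp]
    have ha : #(ULift.{u} (Fin m.down)) ≤ L.card + ℵ₀ := by
      refine le_trans ?_ hμ
      simp [Cardinal.mk_uLift, Cardinal.mk_fin]
    have hb : #(L.Formula (Fin m.down)) ≤ L.card + ℵ₀ := card_formula_le L _
    calc #(ULift.{u} (Fin m.down)) * #(L.Formula (Fin m.down))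
        ≤ (L.card + ℵ₀) * (L.card + ℵ₀) := mul_le_mul' ha hb
      _ = L.card + ℵ₀ := Cardinal.mul_eq_self hμ
  calc Cardinal.sum (fun m : ULift.{u} ℕ =>
        #(ULift.{u} (Fin m.down) × L.Formula (Fin m.down)))
      ≤ Cardinal.sum (fun _ : ULift.{u} ℕ => L.card + ℵ₀) := Cardinal.sum_le_sum _ _ h2
    _ = #(ULift.{u} ℕ) * (L.card + ℵ₀) := Cardinal.sum_const' _ _
    _ = ℵ₀ * (L.card + ℵ₀) := by
        rw [Cardinal.mk_uLift, Cardinal.mk_nat, Cardinal.lift_aleph0]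
    _ ≤ (L.card + ℵ₀) * (L.card + ℵ₀) := mul_le_mul' hμ le_rfl
    _ = L.card + ℵ₀ := Cardinal.mul_eq_self hμ

end Aux

section Key

variable (L : FirstOrder.Language.{u, u}) (M : Type u) [L.Structure M] (κ : Cardinal.{u})

/-- Key lemma: if `rk¹(w) ≥ (|τ|+ℵ₀)⁺` then every instance of the successor step for `w`
has a witness of rank `≥ (|τ|+ℵ₀)⁺`. -/
theorem exists_high_witness
    {w : Set M} (h : rkGe L M 1 κ (Order.succ (L.card + ℵ₀)).ord w) (hne : w.Nonempty)
    {n : ℕ} (a : Fin n → M) (inj : Function.Injective a) (hr : Set.range a = w)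
    (k : Fin n) (φ : L.Formula (Fin n)) (hqf : φ.IsQF) (hreal : φ.Realize a) :
    ∃ b : Fin 2 → Fin n → M,
      rkGe L M 1 κ (Order.succ (L.card + ℵ₀)).ord
        (Set.range fun p : Fin 2 × Fin n => b p.1 p.2) ∧
      (∀ i : Fin 2, φ.Realize (b i)) ∧ b 0 k ≠ b 1 k ∧
      (∀ m : Fin n, m ≠ k → b 0 m = b 1 m) := by
  set μ := L.card + ℵ₀ with hμdef
  have hμ : ℵ₀ ≤ μ := le_add_self
  have hΛlim : Order.IsSuccLimit ((Order.succ μ).ord) := Cardinal.isSuccLimit_ord (hμ.trans (Order.le_succ μ))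
  by_contra hcon
  -- Step 1: for every limit `γ < Λ` there is a datum with a `Bad` level in `[γ, Λ)`.
  have main : ∀ γ < (Order.succ μ).ord, Order.IsSuccLimit γ →
      ∃ (d : WitIdx L) (ε : Ordinal.{u}), γ ≤ ε ∧ ε < (Order.succ μ).ord ∧ Bad L M 1 κ d ε := by
    intro γ hγ hγlim
    have h1 : rkGe L M 1 κ (Order.succ γ) w :=
      (rkGe_limit L M 1 κ hΛlim w).1 h _ (hΛlim.succ_lt hγ)
    rw [rkGe_succ] at h1
    obtain ⟨-, -, h2⟩ := h1
    obtain ⟨b, hb1, hb2, hb3, hb4, -⟩ := h2 n a inj hr k φ hqf hreal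
    set v := Set.range fun p : Fin 2 × Fin n => b p.1 p.2 with hv
    have hvfin : v.Finite := Set.finite_range _
    have hnpos : ∃ i : Fin n, True := by
      obtain ⟨x, hx⟩ := hne
      rw [← hr] at hx
      obtain ⟨i, -⟩ := hx
      exact ⟨i, trivial⟩
    obtain ⟨i₀, -⟩ := hnpos
    have hvne : v.Nonempty := ⟨b 0 i₀, ⟨(0, i₀), rfl⟩⟩
    have hvnot : ¬ rkGe L M 1 κ (Order.succ μ).ord v :=
      fun hcontra => hcon ⟨b, hcontra, hb2, hb3, hb4⟩
    -- the least failure level of `v`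
    have hSne : {δ : Ordinal.{u} | ¬ rkGe L M 1 κ δ v}.Nonempty := ⟨_, hvnot⟩
    set δ₀ := sInf {δ : Ordinal.{u} | ¬ rkGe L M 1 κ δ v} with hδ₀
    have hδ₀mem : ¬ rkGe L M 1 κ δ₀ v := csInf_mem hSne
    have hbelow : ∀ β < δ₀, rkGe L M 1 κ β v := by
      intro β hβ
      by_contra hnb
      have hmem : β ∈ {δ : Ordinal.{u} | ¬ rkGe L M 1 κ δ v} := hnb
      have hle : δ₀ ≤ β := csInf_le' hmem
      exact absurd hle (not_le.2 hβ)
    have hδ₀Λ : δ₀ < (Order.succ μ).ord := by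
      have hv2 := hvnot
      rw [rkGe_limit L M 1 κ hΛlim v] at hv2
      push_neg at hv2
      obtain ⟨δ, hδΛ, hδnot⟩ := hv2
      exact lt_of_le_of_lt (csInf_le' hδnot) hδΛ
    have hγδ : γ < δ₀ := by
      by_contra h'
      push_neg at h'
      exact hδ₀mem (rkGe_of_le_of_limit L M 1 κ hγlim h' v hb1)
    rcases Ordinal.zero_or_succ_or_isSuccLimit δ₀ with h0 | ⟨ε, hε⟩ | hlim
    · rw [h0] at hγδ
      exact absurd hγδ (not_lt_zero (a := γ))
    · -- δ₀ = succ ε : extract the bad datum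
      have hεγ : γ ≤ ε := by
        rw [← hε] at hγδ
        exact Order.lt_succ_iff.1 hγδ
      have hεΛ : ε < (Order.succ μ).ord := by
        refine lt_trans ?_ hδ₀Λ
        rw [← hε]
        exact Order.lt_succ ε
      have hfail : ¬ rkGe L M 1 κ (Order.succ ε) v := hε ▸ hδ₀mem
      rw [rkGe_succ] at hfail
      have hbadexists : ∃ (n' : ℕ) (a' : Fin n' → M), Function.Injective a' ∧
          Set.range a' = v ∧ ∃ (k' : Fin n') (ψ : L.Formula (Fin n')), ψ.IsQF ∧
          ψ.Realize a' ∧ ¬ ∃ u : Fin 2 → Fin n' → M,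
            rkGe L M 1 κ ε (Set.range fun p : Fin 2 × Fin n' => u p.1 p.2) ∧
            (∀ i : Fin 2, ψ.Realize (u i)) ∧ u 0 k' ≠ u 1 k' ∧
            (∀ m : Fin n', m ≠ k' → u 0 m = u 1 m) := by
        by_contra hno
        push_neg at hno
        apply hfail
        refine ⟨hvfin, hvne, fun n' a' inj' hr' k' ψ hqf' hreal' => ?_⟩
        obtain ⟨u, hu1, hu2, hu3, hu4⟩ := hno n' a' inj' hr' k' ψ hqf' hreal'
        exact ⟨u, hu1, hu2, hu3, hu4, fun hl => absurd hl one_ne_zero⟩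
      obtain ⟨n', a', inj', hr', k', ψ, hqf', hreal', hnowit⟩ := hbadexists
      refine ⟨⟨⟨n'⟩, ⟨⟨k'⟩, ψ⟩⟩, ε, hεγ, hεΛ, ?_, ?_⟩
      · exact hnowit
      · intro ε' hε'
        have hlt : Order.succ ε' < δ₀ := by
          rw [← hε]
          exact Order.succ_lt_succ hε'
        have h5 : rkGe L M 1 κ (Order.succ ε') v := hbelow _ hlt
        rw [rkGe_succ] at h5
        obtain ⟨-, -, h6⟩ := h5
        obtain ⟨u, hu1, hu2, hu3, hu4, -⟩ := h6 n' a' inj' hr' k' ψ hqf' hreal'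
        exact ⟨u, hu1, hu2, hu3, hu4⟩
    · -- δ₀ limit : impossible
      rw [rkGe_limit L M 1 κ hlim v] at hδ₀mem
      exact (hδ₀mem hbelow).elim
  -- Step 2: counting
  classical
  set F : WitIdx L → Ordinal.{u} :=
    fun d => sInf {ε : Ordinal.{u} | ε < (Order.succ μ).ord ∧ Bad L M 1 κ d ε} with hF
  have hFlt : ∀ d, F d < (Order.succ μ).ord := by
    intro d
    rcases Set.eq_empty_or_nonempty
      {ε : Ordinal.{u} | ε < (Order.succ μ).ord ∧ Bad L M 1 κ d ε} with he | hne'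
    · rw [hF]
      simp only [he]
      rw [Ordinal.sInf_empty]
      exact hΛlim.pos
    · exact (csInf_mem hne').1
  have hcof : ((Order.succ μ).ord).cof = Order.succ μ :=
    (Cardinal.isRegular_succ hμ).cof_eq
  have hσ : (⨆ d, F d) < (Order.succ μ).ord := by
    apply Ordinal.iSup_lt_ord
    · rw [hcof]
      exact lt_of_le_of_lt (card_witIdx_le L) (Order.lt_succ μ)
    · exact hFlt
  set σ := ⨆ d, F d with hσdef
  have hγlim : Order.IsSuccLimit (σ + Ordinal.omega0) := Ordinal.isSuccLimit_add σ Ordinal.isSuccLimit_omega0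
  have hγΛ : σ + Ordinal.omega0 < (Order.succ μ).ord := by
    rw [Cardinal.lt_ord, Ordinal.card_add, Ordinal.card_omega0]
    have hσcard : σ.card ≤ μ := by
      rw [Cardinal.lt_ord] at hσ
      exact Order.lt_succ_iff.1 hσ
    calc σ.card + ℵ₀ ≤ μ + ℵ₀ := add_le_add_left hσcard _
      _ = μ := by rw [hμdef, add_assoc, Cardinal.aleph0_add_aleph0]
      _ < Order.succ μ := Order.lt_succ μ
  obtain ⟨d, ε, hged, hltd, hbadd⟩ := main (σ + Ordinal.omega0) hγΛ hγlim
  have h7 : F d ∈ {ε : Ordinal.{u} | ε < (Order.succ μ).ord ∧ Bad L M 1 κ d ε} :=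
    csInf_mem ⟨ε, hltd, hbadd⟩
  have h8 : F d = ε := bad_unique L M 1 κ h7.2 hbadd
  have h9 : F d ≤ σ := le_ciSup (Ordinal.bddAbove_range F) d
  have h10 : σ + Ordinal.omega0 ≤ σ := hged.trans (h8 ▸ h9)
  have h11 : σ < σ + Ordinal.omega0 := by
    have := (add_lt_add_iff_left σ).2 Ordinal.omega0_pos
    simpa using this
  exact absurd h10 (not_le.2 h11)

end Key

/-- If `rk¹(w, M; <κ) ≥ (|τ(M)| + ℵ₀)⁺` then `rk¹(w, M; <κ) = ∞`,
i.e. `rk¹(w, M; <κ) ≥ α` for every ordinal `α`. -/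
theorem stmt_0 (L : FirstOrder.Language.{u, u}) (M : Type u) [L.Structure M]
    (κ : Cardinal.{u}) (hκ : ℵ₀ ≤ κ)
    (w : Set M) (hfin : w.Finite) (hne : w.Nonempty)
    (h : rkGe L M 1 κ (Order.succ (L.card + ℵ₀)).ord w) :
    ∀ α : Ordinal.{u}, rkGe L M 1 κ α w := by
  have hμ : ℵ₀ ≤ L.card + ℵ₀ := le_add_self
  have hΛlim : Order.IsSuccLimit ((Order.succ (L.card + ℵ₀)).ord) :=
    Cardinal.isSuccLimit_ord (hμ.trans (Order.le_succ _))
  have H : ∀ α : Ordinal.{u}, ∀ w : Set M, w.Nonempty →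
      rkGe L M 1 κ (Order.succ (L.card + ℵ₀)).ord w → rkGe L M 1 κ α w := by
    intro α
    induction α using Ordinal.induction with
    | h α IH =>
      intro w hne h
      rcases Ordinal.zero_or_succ_or_isSuccLimit α with rfl | ⟨β, rfl⟩ | hlim
      · exact (rkGe_limit L M 1 κ hΛlim w).1 h 0 hΛlim.pos
      · rw [rkGe_succ]
        have hbase : rkBase L M κ w := by
          have := (rkGe_limit L M 1 κ hΛlim w).1 h 0 hΛlim.pos
          rwa [rkGe_zero] at this
        refine ⟨hbase.1, hbase.2.1, fun n a inj hr k φ hqf hreal => ?_⟩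
        obtain ⟨b, hb1, hb2, hb3, hb4⟩ :=
          exists_high_witness L M κ h hne a inj hr k φ hqf hreal
        have hbne : (Set.range fun p : Fin 2 × Fin n => b p.1 p.2).Nonempty := by
          obtain ⟨x, hx⟩ := hne
          rw [← hr] at hx
          obtain ⟨i, -⟩ := hx
          exact ⟨b 0 i, ⟨(0, i), rfl⟩⟩
        exact ⟨b, IH β (Order.lt_succ β) _ hbne hb1, hb2, hb3, hb4,
          fun hl => absurd hl one_ne_zero⟩
      · rw [rkGe_limit L M 1 κ hlim w]
        exact fun β hβ => IH β hβ w hne h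
  exact fun α => H α w hne h

end Sh522
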